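/- Let n be a positive integer and 1 ≤ ℓ ≤ n. Let ξ be a hypergeometric random variable with parameters (2n, n, ℓ). Then for every real p ≥ 2, E |ξ − E ξ|^p ≤ 2 · (p ℓ / 4)^{p/2}. -/

import Mathlib

/-- The probability that a hypergeometric random variable with parameters
`(N, n, ℓ)` takes the value `k`: `C(ℓ,k) C(N-ℓ, n-k) / C(N, n)`. -/
noncomputable def hgP (N n ℓ k : ℕ) : ℝ :=
  ((ℓ.choose k : ℝ) * ((N - ℓ).choose (n - k) : ℝ)) / ((N.choose n : ℝ))

/-- The mean of a hypergeometric random variable with parameters `(N, n, ℓ)`. -/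
noncomputable def hgMean (N n ℓ : ℕ) : ℝ :=
  ∑ k ∈ Finset.range (ℓ + 1), (k : ℝ) * hgP N n ℓ k

/-- The `p`-th absolute central moment `E |ξ - E ξ|^p` of a hypergeometric random
variable `ξ` with parameters `(N, n, ℓ)`. -/
noncomputable def hgCentralMoment (N n ℓ : ℕ) (p : ℝ) : ℝ :=
  ∑ k ∈ Finset.range (ℓ + 1), |(k : ℝ) - hgMean N n ℓ| ^ p * hgP N n ℓ k


open Finset

open Finset

/-- key central binomial induction -/
lemma aux1 (s n : ℕ) (h : s ≤ n) :
    s * (4 ^ (n - s) * Nat.centralBinom s) ^ 2 ≤ n * Nat.centralBinom n ^ 2 := by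
  induction n, h using Nat.le_induction with
  | base => simp
  | succ n hn ih =>
    have key : (n+1) * Nat.centralBinom (n+1) = 2 * (2*n+1) * Nat.centralBinom n :=
      Nat.succ_mul_centralBinom_succ n
    have h4 : (4:ℕ) ^ (n + 1 - s) = 4 * 4 ^ (n - s) := by
      rw [Nat.succ_sub hn, pow_succ]; ring
    have hmul : (n+1) * (s * (4 ^ (n + 1 - s) * Nat.centralBinom s) ^ 2)
        ≤ (n+1) * ((n+1) * Nat.centralBinom (n+1) ^ 2) := by
      have h2 : (n+1) * ((n+1) * Nat.centralBinom (n+1) ^ 2)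
          = (2 * (2*n+1) * Nat.centralBinom n) ^ 2 := by
        rw [← key]; ring
      rw [h2, h4]
      calc (n+1) * (s * (4 * 4 ^ (n - s) * Nat.centralBinom s) ^ 2)
          = 16 * (n+1) * (s * (4 ^ (n - s) * Nat.centralBinom s) ^ 2) := by ring
        _ ≤ 16 * (n+1) * (n * Nat.centralBinom n ^ 2) := by
            exact Nat.mul_le_mul_left _ ih
        _ ≤ (2 * (2*n+1) * Nat.centralBinom n) ^ 2 := by nlinarith [sq_nonneg (Nat.centralBinom n)]
    exact Nat.le_of_mul_le_mul_left hmul (Nat.succ_pos n)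

lemma aux2 (s n : ℕ) (hs : 1 ≤ s) (hsn : s ≤ n) (hn : n ≤ 2 * s) :
    4 ^ (n - s) * Nat.centralBinom s ≤ 2 * Nat.centralBinom n := by
  have h1 := aux1 s n hsn
  have h2 : s * (4 ^ (n - s) * Nat.centralBinom s) ^ 2 ≤ s * (2 * Nat.centralBinom n) ^ 2 := by
    calc s * (4 ^ (n - s) * Nat.centralBinom s) ^ 2 ≤ n * Nat.centralBinom n ^ 2 := h1
      _ ≤ 2 * s * Nat.centralBinom n ^ 2 := Nat.mul_le_mul_right _ hn
      _ ≤ s * (2 * Nat.centralBinom n) ^ 2 := by ring_nf; omega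
  have h3 := Nat.le_of_mul_le_mul_left h2 hs
  exact (Nat.pow_le_pow_iff_left (by norm_num)).mp h3

lemma aux3 (n ℓ : ℕ) (h1 : 1 ≤ ℓ) (h2 : ℓ ≤ n) :
    2 ^ ℓ * Nat.choose (2*n - ℓ) ((2*n - ℓ)/2) ≤ 2 * Nat.centralBinom n := by
  rcases Nat.even_or_odd ℓ with ⟨a, ha⟩ | ⟨a, ha⟩
  · -- ℓ = 2a
    set s := n - a with hs
    have hme : 2*n - ℓ = 2*s := by omega
    have hdiv : (2*n - ℓ)/2 = s := by omega
    have hcb : Nat.choose (2*n - ℓ) ((2*n - ℓ)/2) = Nat.centralBinom s := by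
      rw [hme]
      have : 2 * s / 2 = s := by omega
      rw [this, Nat.centralBinom_eq_two_mul_choose]
    have hpow : (2:ℕ) ^ ℓ = 4 ^ (n - s) := by
      have : n - s = a := by omega
      rw [this, ha, show (4:ℕ) = 2^2 by norm_num, ← pow_mul]
      ring_nf
    rw [hcb, hpow]
    exact aux2 s n (by omega) (by omega) (by omega)
  · -- ℓ = 2a+1
    set s := n - a - 1 with hs
    have hme : 2*n - ℓ = 2*s + 1 := by omega
    have hdiv : (2*n - ℓ)/2 = s := by omega
    have hcs : 2 * Nat.choose (2*s+1) s = Nat.centralBinom (s+1) := by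
      have hsym : Nat.choose (2*s+1) (s+1) = Nat.choose (2*s+1) s := by
        have : (2*s+1) - s = s + 1 := by omega
        rw [← this, Nat.choose_symm (by omega)]
      have hpascal : Nat.centralBinom (s+1) = Nat.choose (2*s+1) s + Nat.choose (2*s+1) (s+1) := by
        rw [Nat.centralBinom_eq_two_mul_choose]
        have : 2 * (s+1) = (2*s+1) + 1 := by ring
        rw [this, Nat.choose_succ_succ]
      omega
    have hpow : (2:ℕ) ^ ℓ = 2 * 4 ^ (n - (s+1)) := by
      have hna : n - (s+1) = a := by omega
      rw [hna, ha, pow_succ, mul_comm, show (4:ℕ) = 2^2 by norm_num, ← pow_mul]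
    rw [hme]
    have hd2 : (2 * s + 1) / 2 = s := by omega
    rw [hd2, hpow]
    calc 2 * 4 ^ (n - (s+1)) * Nat.choose (2*s+1) s
        = 4 ^ (n - (s+1)) * (2 * Nat.choose (2*s+1) s) := by ring
      _ = 4 ^ (n - (s+1)) * Nat.centralBinom (s+1) := by rw [hcs]
      _ ≤ 2 * Nat.centralBinom n := aux2 (s+1) n (by omega) (by omega) (by omega)

lemma hgP_nonneg (N n ℓ k : ℕ) : 0 ≤ hgP N n ℓ k := by
  unfold hgP; positivity

lemma choose_2n_pos (n : ℕ) : (0:ℝ) < ((2*n).choose n : ℝ) := by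
  have := Nat.centralBinom_pos n
  rw [Nat.centralBinom_eq_two_mul_choose] at this
  exact_mod_cast this

lemma hgP_le (n ℓ k : ℕ) (h1 : 1 ≤ ℓ) (h2 : ℓ ≤ n) :
    hgP (2*n) n ℓ k ≤ 2 * (ℓ.choose k : ℝ) / 2 ^ ℓ := by
  unfold hgP
  rw [div_le_div_iff₀ (choose_2n_pos n) (by positivity)]
  have hnat : ℓ.choose k * ((2*n - ℓ).choose (n - k)) * 2 ^ ℓ
      ≤ 2 * ℓ.choose k * ((2*n).choose n) := by
    calc ℓ.choose k * ((2*n - ℓ).choose (n - k)) * 2 ^ ℓ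
        ≤ ℓ.choose k * ((2*n - ℓ).choose ((2*n - ℓ)/2)) * 2 ^ ℓ := by
          exact Nat.mul_le_mul_right _ (Nat.mul_le_mul_left _ (Nat.choose_le_middle _ _))
      _ = ℓ.choose k * (2 ^ ℓ * (2*n - ℓ).choose ((2*n - ℓ)/2)) := by ring
      _ ≤ ℓ.choose k * (2 * Nat.centralBinom n) := Nat.mul_le_mul_left _ (aux3 n ℓ h1 h2)
      _ = 2 * ℓ.choose k * ((2*n).choose n) := by
          rw [Nat.centralBinom_eq_two_mul_choose]; ring
  calc (ℓ.choose k : ℝ) * ((2*n - ℓ).choose (n - k) : ℝ) * 2 ^ ℓ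
      = ((ℓ.choose k * ((2*n - ℓ).choose (n - k)) * 2 ^ ℓ : ℕ) : ℝ) := by push_cast; ring
    _ ≤ ((2 * ℓ.choose k * ((2*n).choose n) : ℕ) : ℝ) := by exact_mod_cast hnat
    _ = 2 * (ℓ.choose k : ℝ) * ((2*n).choose n : ℝ) := by push_cast; ring

lemma sum_hgP (n ℓ : ℕ) (h2 : ℓ ≤ n) :
    ∑ k ∈ Finset.range (ℓ + 1), hgP (2*n) n ℓ k = 1 := by
  have hnat : ∑ k ∈ Finset.range (ℓ + 1), ℓ.choose k * ((2*n - ℓ).choose (n - k))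
      = (2*n).choose n := by
    have hv := Nat.add_choose_eq ℓ (2*n - ℓ) n
    rw [Finset.Nat.sum_antidiagonal_eq_sum_range_succ_mk] at hv
    have hadd : ℓ + (2*n - ℓ) = 2*n := by omega
    rw [hadd] at hv
    simp only at hv
    rw [hv]
    apply Finset.sum_subset
    · intro x hx
      simp only [Finset.mem_range] at hx ⊢; omega
    · intro x _ hx
      simp only [Finset.mem_range, not_lt] at hx
      rw [Nat.choose_eq_zero_of_lt (by omega), zero_mul]
  unfold hgP
  rw [← Finset.sum_div]
  rw [div_eq_one_iff_eq (choose_2n_pos n).ne']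
  rw [← hnat]; push_cast; ring

lemma hgP_symm (n ℓ k : ℕ) (hk : k ≤ ℓ) (h2 : ℓ ≤ n) :
    hgP (2*n) n ℓ (ℓ - k) = hgP (2*n) n ℓ k := by
  unfold hgP
  rw [Nat.choose_symm hk]
  have h3 : n - (ℓ - k) = (2*n - ℓ) - (n - k) := by omega
  rw [h3, Nat.choose_symm (by omega)]

lemma hgMean_eq (n ℓ : ℕ) (h2 : ℓ ≤ n) : hgMean (2*n) n ℓ = ℓ / 2 := by
  have hrefl : hgMean (2*n) n ℓ
      = ∑ k ∈ Finset.range (ℓ + 1), ((ℓ:ℝ) - k) * hgP (2*n) n ℓ k := by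
    unfold hgMean
    rw [← Finset.sum_range_reflect]
    apply Finset.sum_congr rfl
    intro j hj
    simp only [Finset.mem_range] at hj
    have hjl : j ≤ ℓ := by omega
    have h1 : ℓ + 1 - 1 - j = ℓ - j := by omega
    rw [h1, hgP_symm n ℓ j hjl h2, Nat.cast_sub hjl]
  have hsum := sum_hgP n ℓ h2
  have h2m : hgMean (2*n) n ℓ + hgMean (2*n) n ℓ = ℓ := by
    nth_rewrite 2 [hrefl]
    unfold hgMean
    rw [← Finset.sum_add_distrib]
    have : ∑ k ∈ Finset.range (ℓ + 1),
        ((k:ℝ) * hgP (2*n) n ℓ k + ((ℓ:ℝ) - k) * hgP (2*n) n ℓ k)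
        = ∑ k ∈ Finset.range (ℓ + 1), (ℓ:ℝ) * hgP (2*n) n ℓ k := by
      apply Finset.sum_congr rfl; intro k _; ring
    rw [this, ← Finset.mul_sum, hsum, mul_one]
  linarith

lemma mgf_bound (ℓ : ℕ) (t : ℝ) :
    ∑ k ∈ Finset.range (ℓ + 1), (ℓ.choose k : ℝ) / 2 ^ ℓ * Real.exp (t * ((k:ℝ) - ℓ/2))
      ≤ Real.exp (t^2 * ℓ / 8) := by
  have hsum : ∑ k ∈ Finset.range (ℓ + 1), (ℓ.choose k : ℝ) / 2 ^ ℓ * Real.exp (t * ((k:ℝ) - ℓ/2))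
      = (Real.exp (-(t/2)) / 2) ^ ℓ * (Real.exp t + 1) ^ ℓ := by
    have hb : (Real.exp t + 1) ^ ℓ
        = ∑ k ∈ Finset.range (ℓ + 1), Real.exp t ^ k * (ℓ.choose k : ℝ) := by
      rw [add_pow]; apply Finset.sum_congr rfl; intro k _; rw [one_pow, mul_one]
    rw [hb, Finset.mul_sum]
    apply Finset.sum_congr rfl
    intro k _
    rw [div_pow, ← Real.exp_nat_mul (-(t/2)) ℓ, ← Real.exp_nat_mul t k]
    rw [show t * ((k:ℝ) - ℓ/2) = (↑ℓ * -(t/2)) + ↑k * t by ring, Real.exp_add]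
    ring
  rw [hsum]
  have hcosh : (Real.exp (-(t/2)) / 2) * (Real.exp t + 1) = Real.cosh (t/2) := by
    have hh : Real.exp (-(t/2)) * Real.exp t = Real.exp (t/2) := by
      rw [← Real.exp_add]; ring_nf
    rw [Real.cosh_eq]
    linear_combination hh / 2
  rw [← mul_pow, hcosh]
  calc Real.cosh (t/2) ^ ℓ ≤ Real.exp ((t/2)^2/2) ^ ℓ := by
        apply pow_le_pow_left₀ (le_of_lt (Real.cosh_pos _)) (Real.cosh_le_exp_half_sq _)
    _ = Real.exp (t^2 * ℓ / 8) := by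
        rw [← Real.exp_nat_mul]; ring_nf

lemma ptwise (p lam x : ℝ) (hp : 0 < p) (hl : 0 < lam) :
    |x| ^ p ≤ (p / (Real.exp 1 * lam)) ^ p * (Real.exp (lam * x) + Real.exp (-(lam * x))) := by
  have hbase : 0 < p / (Real.exp 1 * lam) := by positivity
  have hkey : |x| ^ p ≤ (p / (Real.exp 1 * lam)) ^ p * Real.exp (lam * |x|) := by
    rcases eq_or_lt_of_le (abs_nonneg x) with h0 | h0
    · rw [← h0, Real.zero_rpow hp.ne']; positivity
    · rw [Real.rpow_def_of_pos h0, Real.rpow_def_of_pos hbase, ← Real.exp_add]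
      apply Real.exp_le_exp.mpr
      have hlog := Real.log_le_sub_one_of_pos (show 0 < lam * |x| / p by positivity)
      have e1 : Real.log (lam * |x| / p) = Real.log lam + Real.log |x| - Real.log p := by
        rw [Real.log_div (by positivity) hp.ne', Real.log_mul hl.ne' h0.ne']
      have e2 : Real.log (p / (Real.exp 1 * lam)) = Real.log p - (1 + Real.log lam) := by
        rw [Real.log_div hp.ne' (by positivity), Real.log_mul (Real.exp_pos 1).ne' hl.ne',
          Real.log_exp]
      have e3 : p * (lam * |x| / p) = lam * |x| := by field_simp
      rw [e1] at hlog
      rw [e2]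
      nlinarith [mul_le_mul_of_nonneg_left hlog hp.le]
  apply hkey.trans
  apply mul_le_mul_of_nonneg_left _ (Real.rpow_nonneg hbase.le p)
  rcases abs_cases x with ⟨h, _⟩ | ⟨h, _⟩
  · rw [h]; exact le_add_of_nonneg_right (Real.exp_pos _).le
  · rw [h]
    have : lam * -x = -(lam * x) := by ring
    rw [this]
    exact le_add_of_nonneg_left (Real.exp_pos _).le

theorem stmt13 (n ℓ : ℕ) (h1 : 1 ≤ ℓ) (h2 : ℓ ≤ n) (p : ℝ) (hp : 2 ≤ p) :
    hgCentralMoment (2 * n) n ℓ p ≤ 2 * (p * ℓ / 4) ^ (p / 2) := by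
  have hp0 : (0:ℝ) < p := by linarith
  have hl0 : (0:ℝ) < (ℓ:ℝ) := by exact_mod_cast h1
  set lam : ℝ := 2 * Real.sqrt (p / ℓ) with hlamdef
  have hlam : 0 < lam := by positivity
  have hlamsq : lam ^ 2 = 4 * p / ℓ := by
    rw [hlamdef, mul_pow, Real.sq_sqrt (by positivity)]
    ring
  set C : ℝ := (p / (Real.exp 1 * lam)) ^ p with hCdef
  have hCnn : 0 ≤ C := Real.rpow_nonneg (by positivity) p
  have hmean := hgMean_eq n ℓ h2
  -- step A : termwise bound
  have stepA : hgCentralMoment (2*n) n ℓ p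
      ≤ ∑ k ∈ Finset.range (ℓ + 1),
          C * (Real.exp (lam * ((k:ℝ) - ℓ/2)) + Real.exp ((-lam) * ((k:ℝ) - ℓ/2)))
            * (2 * (ℓ.choose k : ℝ) / 2 ^ ℓ) := by
    unfold hgCentralMoment
    rw [hmean]
    apply Finset.sum_le_sum
    intro k _
    have hpt := ptwise p lam ((k:ℝ) - ℓ/2) hp0 hlam
    rw [show -(lam * ((k:ℝ) - ℓ/2)) = (-lam) * ((k:ℝ) - ℓ/2) by ring] at hpt
    have hP := hgP_le n ℓ k h1 h2
    exact mul_le_mul hpt hP (hgP_nonneg _ _ _ _) (by positivity)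
  -- step B : sum the MGFs
  have stepB : ∑ k ∈ Finset.range (ℓ + 1),
          C * (Real.exp (lam * ((k:ℝ) - ℓ/2)) + Real.exp ((-lam) * ((k:ℝ) - ℓ/2)))
            * (2 * (ℓ.choose k : ℝ) / 2 ^ ℓ)
      ≤ 4 * C * Real.exp (p/2) := by
    have hrw : ∑ k ∈ Finset.range (ℓ + 1),
          C * (Real.exp (lam * ((k:ℝ) - ℓ/2)) + Real.exp ((-lam) * ((k:ℝ) - ℓ/2)))
            * (2 * (ℓ.choose k : ℝ) / 2 ^ ℓ)
        = 2 * C * ((∑ k ∈ Finset.range (ℓ + 1),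
              (ℓ.choose k : ℝ) / 2 ^ ℓ * Real.exp (lam * ((k:ℝ) - ℓ/2)))
            + (∑ k ∈ Finset.range (ℓ + 1),
              (ℓ.choose k : ℝ) / 2 ^ ℓ * Real.exp ((-lam) * ((k:ℝ) - ℓ/2)))) := by
      rw [← Finset.sum_add_distrib, Finset.mul_sum]
      apply Finset.sum_congr rfl
      intro k _
      ring
    rw [hrw]
    have hexp : lam ^ 2 * ℓ / 8 = p / 2 := by
      rw [hlamsq]; field_simp; ring
    have hm1 := mgf_bound ℓ lam
    have hm2 := mgf_bound ℓ (-lam)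
    rw [show (-lam) ^ 2 = lam ^ 2 by ring, hexp] at hm2
    rw [hexp] at hm1
    calc 2 * C * ((∑ k ∈ Finset.range (ℓ + 1),
              (ℓ.choose k : ℝ) / 2 ^ ℓ * Real.exp (lam * ((k:ℝ) - ℓ/2)))
            + (∑ k ∈ Finset.range (ℓ + 1),
              (ℓ.choose k : ℝ) / 2 ^ ℓ * Real.exp ((-lam) * ((k:ℝ) - ℓ/2))))
        ≤ 2 * C * (Real.exp (p/2) + Real.exp (p/2)) := by
          apply mul_le_mul_of_nonneg_left (add_le_add hm1 hm2) (by positivity)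
      _ = 4 * C * Real.exp (p/2) := by ring
  -- step C : numeric evaluation
  have hsp : 0 < Real.sqrt p := Real.sqrt_pos.mpr hp0
  have hsl : 0 < Real.sqrt (ℓ:ℝ) := Real.sqrt_pos.mpr hl0
  have hps : Real.sqrt p * Real.sqrt p = p := Real.mul_self_sqrt hp0.le
  have hC : p / (Real.exp 1 * lam) = Real.sqrt (p * ℓ) / (2 * Real.exp 1) := by
    rw [hlamdef, Real.sqrt_mul hp0.le, Real.sqrt_div hp0.le]
    rw [div_eq_div_iff (by positivity) (by positivity)]
    field_simp
    linear_combination (-1) * hps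
  have hCval : C = (p * ℓ) ^ (p/2) / (2 ^ p * Real.exp p) := by
    rw [hCdef, hC, Real.div_rpow (Real.sqrt_nonneg _) (by positivity)]
    congr 1
    · rw [Real.sqrt_eq_rpow, ← Real.rpow_mul (by positivity)]
      ring_nf
    · rw [Real.mul_rpow (by norm_num) (Real.exp_pos 1).le, Real.exp_one_rpow]
  have h4 : ((4:ℝ)) ^ (p/2) = 2 ^ p := by
    rw [show (4:ℝ) = (2:ℝ) ^ (2:ℝ) by
        rw [show (2:ℝ) = ((2:ℕ):ℝ) from by norm_num, Real.rpow_natCast]; norm_num,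
      ← Real.rpow_mul (by norm_num)]
    congr 1
    ring
  have htarget : 2 * (p * ℓ / 4) ^ (p / 2) = 2 * ((p * ℓ) ^ (p/2) / 2 ^ p) := by
    rw [Real.div_rpow (by positivity) (by norm_num), h4]
  -- final combination
  have hfinal : 4 * C * Real.exp (p/2) ≤ 2 * (p * ℓ / 4) ^ (p / 2) := by
    rw [htarget, hCval]
    set X : ℝ := (p * ℓ) ^ (p/2) with hXdef
    have hX : 0 ≤ X := Real.rpow_nonneg (by positivity) _
    have hE : (2:ℝ) ≤ Real.exp (p/2) := by
      have he1 : (2:ℝ) ≤ Real.exp 1 := by have := Real.add_one_le_exp 1; linarith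
      exact he1.trans (Real.exp_le_exp.mpr (by linarith))
    have hE0 : 0 < Real.exp (p/2) := Real.exp_pos _
    have hEp : Real.exp p = Real.exp (p/2) * Real.exp (p/2) := by
      rw [← Real.exp_add]; ring_nf
    rw [hEp]
    have key : 4 * (X / (2 ^ p * (Real.exp (p/2) * Real.exp (p/2)))) * Real.exp (p/2)
        = (4 / Real.exp (p/2)) * (X / 2 ^ p) := by
      field_simp
    have h2p : (0:ℝ) < 2 ^ (p:ℝ) := Real.rpow_pos_of_pos (by norm_num) _
    calc 4 * (X / (2 ^ p * (Real.exp (p/2) * Real.exp (p/2)))) * Real.exp (p/2)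
        = (4 / Real.exp (p/2)) * (X / 2 ^ p) := key
      _ ≤ 2 * (X / 2 ^ p) := by
          apply mul_le_mul_of_nonneg_right _ (by positivity)
          rw [div_le_iff₀ hE0]; linarith
  exact stepA.trans (stepB.trans hfinal)
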